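/- Let r0 > 0 and a > 0. For ε > 0 define u_ε : ℝ² → ℝ by u_ε(x) = log(ε²/((ε² + ‖x‖²)²)) and v_ε = u_ε − (π·r0²)⁻¹·∫_B u_ε(x) dx. There exists a constant C > 0 such that for every ε ∈ (0,1], |log(∫_B e^{−a·v_ε(x)} dx)| ≤ C. -/

import Mathlib

open Real

/-- The Liouville bubble u_ε on ℝ². -/
noncomputable def bubble (ε : ℝ) (x : EuclideanSpace ℝ (Fin 2)) : ℝ :=
  Real.log (ε ^ 2 / (ε ^ 2 + ‖x‖ ^ 2) ^ 2)

/-- The normalized bubble v_ε = u_ε − (π r0²)⁻¹ ∫_B u_ε. -/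
noncomputable def nbubble (r0 ε : ℝ) (x : EuclideanSpace ℝ (Fin 2)) : ℝ :=
  bubble ε x -
    (π * r0 ^ 2)⁻¹ * ∫ y in Metric.ball (0 : EuclideanSpace ℝ (Fin 2)) r0, bubble ε y

open MeasureTheory Metric

local notation "E2" => EuclideanSpace ℝ (Fin 2)


lemma vol2 (c : E2) (r : ℝ) (hr : 0 ≤ r) :
    (volume (Metric.ball c r)).toReal = π * r ^ 2 := by
  rw [EuclideanSpace.volume_ball]
  have h2 : (Fintype.card (Fin 2) : ℝ) / 2 + 1 = 2 := by simp; norm_num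
  rw [h2, Real.Gamma_two]
  simp [Real.sq_sqrt pi_pos.le, ENNReal.toReal_mul, ENNReal.toReal_pow,
    ENNReal.toReal_ofReal hr, ENNReal.toReal_ofReal pi_pos.le]
  ring

lemma negpart (r0 : ℝ) {ε : ℝ} (hε : 0 < ε) :
    ∫⁻ x in ball (0:E2) r0, ENNReal.ofReal (-(Real.log (ε^2+‖x‖^2)))
      ≤ ENNReal.ofReal π := by
  set g : E2 → ℝ := fun x => max (-(2 * Real.log ‖x‖)) 0 with hg
  have hgm : Measurable g :=
    ((Real.measurable_log.comp measurable_norm).const_mul 2).neg.max measurable_const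
  have step1 : ∫⁻ x in ball (0:E2) r0, ENNReal.ofReal (-(Real.log (ε^2+‖x‖^2)))
      ≤ ∫⁻ x in ball (0:E2) r0, ENNReal.ofReal (g x) := by
    apply lintegral_mono_ae
    have h0 : (volume.restrict (ball (0:E2) r0)) {(0:E2)} = 0 := by
      simp [Measure.restrict_apply' measurableSet_ball]
      exact measure_mono_null Set.inter_subset_left (measure_singleton _)
    filter_upwards [measure_eq_zero_iff_ae_notMem.mp h0] with x hx
    apply ENNReal.ofReal_le_ofReal
    have hxn : 0 < ‖x‖ := by
      simpa [norm_pos_iff] using hx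
    have : Real.log (‖x‖^2) ≤ Real.log (ε^2 + ‖x‖^2) :=
      Real.log_le_log (by positivity) (by nlinarith)
    rw [Real.log_pow] at this
    have : -(Real.log (ε^2+‖x‖^2)) ≤ -(2 * Real.log ‖x‖) := by push_cast at this; linarith
    exact this.trans (le_max_left _ _)
  have step2 : ∫⁻ x in ball (0:E2) r0, ENNReal.ofReal (g x)
      ≤ ∫⁻ x : E2, ENNReal.ofReal (g x) := setLIntegral_le_lintegral _ _
  have step3 : ∫⁻ x : E2, ENNReal.ofReal (g x)
      = ∫⁻ t in Set.Ioi (0:ℝ), volume {x : E2 | t < g x} :=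
    lintegral_eq_lintegral_meas_lt _ (Filter.Eventually.of_forall fun x => le_max_right _ _)
      hgm.aemeasurable
  have step4 : ∫⁻ t in Set.Ioi (0:ℝ), volume {x : E2 | t < g x}
      ≤ ∫⁻ t in Set.Ioi (0:ℝ), ENNReal.ofReal π * ENNReal.ofReal (Real.exp (-t)) := by
    apply setLIntegral_mono (by fun_prop)
    intro t ht
    have hset : {x : E2 | t < g x} ⊆ ball (0:E2) (Real.exp (-t/2)) := by
      intro x hx
      simp only [Set.mem_setOf_eq, hg] at hx
      have h1 : t < -(2 * Real.log ‖x‖) := by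
        rcases lt_max_iff.mp hx with h | h
        · exact h
        · exact absurd h (not_lt.mpr ht.le)
      have hxn : x ≠ 0 := by
        rintro rfl
        simp at h1; linarith [ht.out]
      have : Real.log ‖x‖ < -t/2 := by linarith
      have := (Real.log_lt_iff_lt_exp (norm_pos_iff.mpr hxn)).mp this
      simpa [mem_ball_zero_iff] using this
    calc volume {x : E2 | t < g x} ≤ volume (ball (0:E2) (Real.exp (-t/2))) :=
          measure_mono hset
      _ = ENNReal.ofReal π * ENNReal.ofReal (Real.exp (-t)) := by
          rw [EuclideanSpace.volume_ball]
          have h2 : (Fintype.card (Fin 2) : ℝ) / 2 + 1 = 2 := by simp; norm_num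
          rw [h2, Real.Gamma_two]
          rw [← ENNReal.ofReal_pow (Real.exp_pos _).le, ← Real.exp_nat_mul]
          norm_num
          rw [mul_comm]
          congr 2
          · rw [← ENNReal.ofReal_pow (Real.sqrt_nonneg _), Real.sq_sqrt pi_pos.le]
          · ring
  have step5 : ∫⁻ t in Set.Ioi (0:ℝ), ENNReal.ofReal π * ENNReal.ofReal (Real.exp (-t))
      = ENNReal.ofReal π := by
    rw [lintegral_const_mul _ (by fun_prop)]
    have : ∫⁻ t in Set.Ioi (0:ℝ), ENNReal.ofReal (Real.exp (-t)) = ENNReal.ofReal 1 := by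
      rw [← ofReal_integral_eq_lintegral_ofReal]
      · rw [integral_exp_neg_Ioi_zero]
      · have := exp_neg_integrableOn_Ioi 0 one_pos; simp at this; exact this
      · exact Filter.Eventually.of_forall fun t => (Real.exp_pos _).le
    rw [this]; simp
  calc _ ≤ _ := step1
    _ ≤ _ := step2
    _ = _ := step3
    _ ≤ _ := step4
    _ = _ := step5

lemma contL {ε : ℝ} (hε : 0 < ε) :
    Continuous fun x : E2 => Real.log (ε^2 + ‖x‖^2) :=
  (continuous_const.add (continuous_norm.pow 2)).log fun x => (by positivity : (0:ℝ) < ε^2 + ‖x‖^2).ne'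

lemma intL (r0 : ℝ) {ε : ℝ} (hε : 0 < ε) :
    IntegrableOn (fun x : E2 => Real.log (ε^2 + ‖x‖^2)) (ball 0 r0) :=
  ((contL hε).locallyIntegrable.integrableOn_isCompact
    (isCompact_closedBall 0 r0)).mono_set ball_subset_closedBall

lemma contR {ε a : ℝ} (hε : 0 < ε) (ha : 0 < a) :
    Continuous fun x : E2 => (ε^2 + ‖x‖^2) ^ (2*a) :=
  (continuous_const.add (continuous_norm.pow 2)).rpow_const fun x => Or.inl (by positivity : (0:ℝ) < ε^2 + ‖x‖^2).ne'

lemma intR (r0 : ℝ) {ε a : ℝ} (hε : 0 < ε) (ha : 0 < a) :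
    IntegrableOn (fun x : E2 => (ε^2 + ‖x‖^2) ^ (2*a)) (ball 0 r0) :=
  ((contR hε ha).locallyIntegrable.integrableOn_isCompact
    (isCompact_closedBall 0 r0)).mono_set ball_subset_closedBall
-- bounds on I
lemma I_lower (r0 : ℝ) {ε : ℝ} (hε : 0 < ε) :
    -π ≤ ∫ x in ball (0:E2) r0, Real.log (ε^2 + ‖x‖^2) := by
  rw [integral_eq_lintegral_pos_part_sub_lintegral_neg_part (intL r0 hε)]
  have h1 : (∫⁻ x in ball (0:E2) r0,
      ENNReal.ofReal (-(Real.log (ε^2+‖x‖^2)))).toReal ≤ π := by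
    refine ENNReal.toReal_le_of_le_ofReal pi_pos.le (negpart r0 hε)
  have h2 : 0 ≤ (∫⁻ x in ball (0:E2) r0,
      ENNReal.ofReal (Real.log (ε^2+‖x‖^2))).toReal := ENNReal.toReal_nonneg
  linarith

lemma I_upper (r0 : ℝ) (hr : 0 < r0) {ε : ℝ} (hε : 0 < ε) (hε1 : ε ≤ 1) :
    ∫ x in ball (0:E2) r0, Real.log (ε^2 + ‖x‖^2) ≤ π * r0^2 * Real.log (1 + r0^2) := by
  have : ∫ x in ball (0:E2) r0, Real.log (ε^2 + ‖x‖^2)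
      ≤ ∫ _x in ball (0:E2) r0, Real.log (1 + r0^2) := by
    apply setIntegral_mono_on (intL r0 hε)
      (integrableOn_const measure_ball_lt_top.ne) measurableSet_ball
    intro x hx
    apply Real.log_le_log (by positivity)
    have hx' : ‖x‖ < r0 := by simpa [mem_ball_zero_iff] using hx
    nlinarith [norm_nonneg x]
  rw [setIntegral_const, measureReal_def, vol2 _ _ hr.le, smul_eq_mul] at this
  exact this

-- bounds on J
lemma J_upper (r0 : ℝ) (hr : 0 < r0) {ε a : ℝ} (hε : 0 < ε) (hε1 : ε ≤ 1) (ha : 0 < a) :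
    ∫ x in ball (0:E2) r0, (ε^2 + ‖x‖^2) ^ (2*a) ≤ π * r0^2 * (1 + r0^2) ^ (2*a) := by
  have : ∫ x in ball (0:E2) r0, (ε^2 + ‖x‖^2) ^ (2*a)
      ≤ ∫ _x in ball (0:E2) r0, (1 + r0^2) ^ (2*a) := by
    apply setIntegral_mono_on (intR r0 hε ha)
      (integrableOn_const measure_ball_lt_top.ne) measurableSet_ball
    intro x hx
    apply Real.rpow_le_rpow (by positivity) ?_ (by positivity)
    have hx' : ‖x‖ < r0 := by simpa [mem_ball_zero_iff] using hx
    nlinarith [norm_nonneg x]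
  rw [setIntegral_const, measureReal_def, vol2 _ _ hr.le, smul_eq_mul] at this
  exact this

lemma J_lower (r0 : ℝ) (hr : 0 < r0) {ε a : ℝ} (hε : 0 < ε) (ha : 0 < a) :
    ((r0/4)^2) ^ (2*a) * (π * (r0/4)^2)
      ≤ ∫ x in ball (0:E2) r0, (ε^2 + ‖x‖^2) ^ (2*a) := by
  set c : E2 := EuclideanSpace.single (0 : Fin 2) (r0/2) with hc
  have hcn : ‖c‖ = r0/2 := by
    rw [hc, EuclideanSpace.norm_single]
    rw [Real.norm_eq_abs, abs_of_nonneg (by positivity)]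
  have hsub : ball c (r0/4) ⊆ ball (0:E2) r0 := by
    intro x hx
    rw [mem_ball_zero_iff]
    have h1 : ‖x - c‖ < r0/4 := by rwa [mem_ball_iff_norm] at hx
    calc ‖x‖ = ‖x - c + c‖ := by rw [sub_add_cancel]
      _ ≤ ‖x - c‖ + ‖c‖ := norm_add_le _ _
      _ < r0/4 + r0/2 := by rw [hcn]; linarith
      _ ≤ r0 := by linarith
  have hlow : ∀ x ∈ ball c (r0/4), r0/4 ≤ ‖x‖ := by
    intro x hx
    have h1 : ‖c - x‖ < r0/4 := by rwa [mem_ball_iff_norm'] at hx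
    have := norm_sub_norm_le c x
    rw [hcn] at this
    linarith
  calc ((r0/4)^2) ^ (2*a) * (π * (r0/4)^2)
      = ∫ _x in ball c (r0/4), ((r0/4)^2) ^ (2*a) := by
        rw [setIntegral_const, measureReal_def, vol2 _ _ (by positivity), smul_eq_mul]; ring
    _ ≤ ∫ x in ball c (r0/4), (ε^2 + ‖x‖^2) ^ (2*a) := by
        apply setIntegral_mono_on
          (integrableOn_const measure_ball_lt_top.ne)
          (((intR r0 hε ha)).mono_set hsub) measurableSet_ball
        intro x hx
        apply Real.rpow_le_rpow (by positivity) ?_ (by positivity)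
        have := hlow x hx
        nlinarith
    _ ≤ ∫ x in ball (0:E2) r0, (ε^2 + ‖x‖^2) ^ (2*a) := by
        apply setIntegral_mono_set (intR r0 hε ha)
          (Filter.Eventually.of_forall fun x => by positivity)
          (HasSubset.Subset.eventuallyLE hsub)

theorem stmt_13 (r0 a : ℝ) (hr : 0 < r0) (ha : 0 < a) :
    ∃ C > 0, ∀ ε ∈ Set.Ioc (0:ℝ) 1,
      |Real.log (∫ x in Metric.ball (0 : EuclideanSpace ℝ (Fin 2)) r0,
          Real.exp (-a * nbubble r0 ε x))| ≤ C := by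
  set M : ℝ := π * r0^2 * Real.log (1 + r0^2) with hM
  set j0 : ℝ := ((r0/4)^2) ^ (2*a) * (π * (r0/4)^2) with hj0def
  set J0 : ℝ := π * r0^2 * (1 + r0^2) ^ (2*a) with hJ0def
  have hj0 : 0 < j0 := by rw [hj0def]; positivity
  have hV : 0 < π * r0^2 := by positivity
  refine ⟨2*a*(π*r0^2)⁻¹*(π + |M|) + (|Real.log j0| + |Real.log J0|) + 1, by positivity, ?_⟩
  rintro ε ⟨hε, hε1⟩
  set I := ∫ x in ball (0:E2) r0, Real.log (ε^2 + ‖x‖^2) with hI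
  set J := ∫ x in ball (0:E2) r0, (ε^2 + ‖x‖^2) ^ (2*a) with hJ
  have hJpos : 0 < J := lt_of_lt_of_le hj0 (J_lower r0 hr hε ha)
  have hb : ∀ x : E2, bubble ε x = 2*Real.log ε - 2 * Real.log (ε^2+‖x‖^2) := by
    intro x
    unfold bubble
    have h1 : (0:ℝ) < ε^2 + ‖x‖^2 := by positivity
    rw [Real.log_div (by positivity) (by positivity), Real.log_pow, Real.log_pow]
    push_cast; ring
  have hBint : ∫ y in ball (0:E2) r0, bubble ε y = 2*Real.log ε * (π*r0^2) - 2*I := by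
    calc ∫ y in ball (0:E2) r0, bubble ε y
        = ∫ y in ball (0:E2) r0, ((2*Real.log ε) - 2 * Real.log (ε^2+‖y‖^2)) :=
          setIntegral_congr_fun measurableSet_ball fun x _ => hb x
      _ = (∫ _y in ball (0:E2) r0, (2*Real.log ε))
            - ∫ y in ball (0:E2) r0, 2 * Real.log (ε^2+‖y‖^2) :=
          integral_sub (integrableOn_const measure_ball_lt_top.ne)
            ((intL r0 hε).const_mul 2)
      _ = 2*Real.log ε * (π*r0^2) - 2*I := by
          rw [setIntegral_const, measureReal_def, vol2 _ _ hr.le, smul_eq_mul, integral_const_mul, ← hI]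
          ring
  have hc : (π * r0 ^ 2)⁻¹ * (∫ y in ball (0:E2) r0, bubble ε y)
      = 2*Real.log ε - 2*(π*r0^2)⁻¹*I := by
    rw [hBint]; field_simp
  have hnb : ∀ x : E2, nbubble r0 ε x
      = 2*(π*r0^2)⁻¹*I - 2*Real.log (ε^2+‖x‖^2) := by
    intro x
    unfold nbubble
    rw [hb x, hc]
    ring
  have hK : ∀ x : E2, Real.exp (-a * nbubble r0 ε x)
      = Real.exp (-(2*a*(π*r0^2)⁻¹*I)) * (ε^2+‖x‖^2) ^ (2*a) := by
    intro x
    rw [Real.rpow_def_of_pos (by positivity), ← Real.exp_add, hnb x]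
    congr 1
    ring
  have hIntegral : ∫ x in ball (0:E2) r0, Real.exp (-a * nbubble r0 ε x)
      = Real.exp (-(2*a*(π*r0^2)⁻¹*I)) * J := by
    calc ∫ x in ball (0:E2) r0, Real.exp (-a * nbubble r0 ε x)
        = ∫ x in ball (0:E2) r0,
            Real.exp (-(2*a*(π*r0^2)⁻¹*I)) * (ε^2+‖x‖^2) ^ (2*a) :=
          setIntegral_congr_fun measurableSet_ball fun x _ => hK x
      _ = _ := by rw [integral_const_mul, ← hJ]
  have hlog : Real.log (∫ x in ball (0:E2) r0, Real.exp (-a * nbubble r0 ε x))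
      = -(2*a*(π*r0^2)⁻¹*I) + Real.log J := by
    rw [hIntegral, Real.log_mul (Real.exp_ne_zero _) hJpos.ne', Real.log_exp]
  rw [hlog]
  have hIabs : |I| ≤ π + |M| := by
    have h1 := I_lower r0 hε
    have h2 := I_upper r0 hr hε hε1
    rw [← hI] at h1 h2
    rw [abs_le]
    constructor
    · have := abs_nonneg M; linarith
    · have := le_abs_self M; have := pi_pos.le; linarith
  have hlogJ : |Real.log J| ≤ |Real.log j0| + |Real.log J0| := by
    have h1 : Real.log j0 ≤ Real.log J := Real.log_le_log hj0 (J_lower r0 hr hε ha)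
    have h2 : Real.log J ≤ Real.log J0 :=
      Real.log_le_log hJpos (J_upper r0 hr hε hε1 ha)
    rw [abs_le]
    constructor
    · have := neg_abs_le (Real.log j0); have := abs_nonneg (Real.log J0); linarith
    · have := le_abs_self (Real.log J0); have := abs_nonneg (Real.log j0); linarith
  calc |(-(2*a*(π*r0^2)⁻¹*I)) + Real.log J|
      ≤ |(-(2*a*(π*r0^2)⁻¹*I))| + |Real.log J| := abs_add_le _ _
    _ ≤ 2*a*(π*r0^2)⁻¹*(π + |M|) + (|Real.log j0| + |Real.log J0|) := by
        have he : |(-(2*a*(π*r0^2)⁻¹*I))| = (2*a*(π*r0^2)⁻¹) * |I| := by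
          rw [abs_neg, mul_assoc, mul_assoc]
          rw [abs_mul, abs_mul, abs_of_nonneg (by norm_num : (0:ℝ) ≤ (2:ℝ)),
            abs_of_nonneg ha.le, abs_mul,
            abs_of_nonneg (by positivity : (0:ℝ) ≤ (π*r0^2)⁻¹)]
          ring
        rw [he]
        have := mul_le_mul_of_nonneg_left hIabs
          (by positivity : (0:ℝ) ≤ 2*a*(π*r0^2)⁻¹)
        linarith
    _ ≤ _ := by linarith
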